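/- If p is a prime with p < 2n+1 and 2n+p is prime, then the ladder P_n × P_2 has a consecutive cyclic prime labeling; specifically, defining the labeling that assigns to the cycle v_1,...,v_n,u_n,...,u_1 the consecutive values (starting with 1 placed so that exactly (p-1)/2 - 1 vertices lie to its right in the top row) yields adjacent vertices with coprime labels. -/

import Mathlib

/-- Adjacency in the ladder graph `P_n × P_2`: vertices are pairs (column, row). -/
def ladderAdj (n : ℕ) (v w : Fin n × Fin 2) : Prop :=
  (v.2 = w.2 ∧ ((v.1 : ℕ) + 1 = (w.1 : ℕ) ∨ (w.1 : ℕ) + 1 = (v.1 : ℕ))) ∨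
  (v.1 = w.1 ∧ v.2 ≠ w.2)

/-- Position of a vertex along the cycle `v₁, …, v_n, u_n, …, u₁`. -/
def cyclePos (n : ℕ) (v : Fin n × Fin 2) : ℕ :=
  if v.2 = 0 then (v.1 : ℕ) + 1 else 2 * n - (v.1 : ℕ)

/-- The consecutive cyclic labeling in which the label 1 is placed on the top row,
`(p-1)/2 - 1` places from the top right vertex. -/
def ccpLabel (n p : ℕ) (v : Fin n × Fin 2) : ℕ :=
  (cyclePos n v + 2 * n - (n + 1 - (p - 1) / 2)) % (2 * n) + 1

lemma aux_key1 (a b : ℕ) (ha : 0 < a) (hb : 0 < b) (h : Nat.Prime (a + b)) :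
    Nat.Coprime a b := by
  have hd : Nat.gcd a b ∣ a + b := Nat.dvd_add (Nat.gcd_dvd_left a b) (Nat.gcd_dvd_right a b)
  rcases Nat.Prime.eq_one_or_self_of_dvd h _ hd with h1 | h1
  · exact h1
  · have hle : Nat.gcd a b ≤ a := Nat.le_of_dvd ha (Nat.gcd_dvd_left a b)
    omega

lemma aux_key2 (N x : ℕ) (hN : 0 < N) :
    Nat.Coprime (x % N + 1) ((x + 1) % N + 1) := by
  rcases eq_or_lt_of_le (show 1 ≤ N from hN) with h1 | h1
  · simp [← h1, Nat.mod_one]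
  · have hx : x % N < N := Nat.mod_lt _ hN
    have hmod : (x + 1) % N = (x % N + 1) % N := by
      rw [Nat.add_mod, Nat.mod_eq_of_lt h1]
    rcases Nat.lt_or_ge (x % N + 1) N with h2 | h2
    · rw [hmod, Nat.mod_eq_of_lt h2]
      show Nat.gcd (x % N + 1) (x % N + 1 + 1) = 1
      rw [Nat.add_comm (x % N + 1) 1, Nat.gcd_add_self_right, Nat.gcd_one_right]
    · have h3 : x % N + 1 = N := by omega
      rw [hmod, h3, Nat.mod_self]
      exact Nat.coprime_one_right _

theorem stmt_8 (n p : ℕ) (hn : 0 < n) (hp : Nat.Prime p) (hlt : p < 2 * n + 1)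
    (hq : Nat.Prime (2 * n + p)) :
    ∀ v w, ladderAdj n v w → Nat.Coprime (ccpLabel n p v) (ccpLabel n p w) := by
  have hp2 : p ≠ 2 := by
    rintro rfl
    have h2 : (2:ℕ) ∣ 2 * n + 2 := ⟨n + 1, by ring⟩
    have := Nat.Prime.eq_one_or_self_of_dvd hq 2 h2
    omega
  have hodd : p % 2 = 1 := by
    rcases hp.eq_two_or_odd with h | h
    · exact absurd h hp2
    · exact h
  have hp3 : 3 ≤ p := by have := hp.two_le; omega
  have main_h : ∀ x y : ℕ, y = x + 1 →
      Nat.Coprime ((x + 2 * n - (n + 1 - (p - 1) / 2)) % (2 * n) + 1)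
        ((y + 2 * n - (n + 1 - (p - 1) / 2)) % (2 * n) + 1) := by
    intro x y hxy
    have h1 : y + 2 * n - (n + 1 - (p - 1) / 2) = (x + 2 * n - (n + 1 - (p - 1) / 2)) + 1 := by
      omega
    rw [h1]
    exact aux_key2 (2 * n) (x + 2 * n - (n + 1 - (p - 1) / 2)) (by omega)
  have main_v : ∀ x y : ℕ, x + y = 2 * n + 1 →
      Nat.Coprime ((x + 2 * n - (n + 1 - (p - 1) / 2)) % (2 * n) + 1)
        ((y + 2 * n - (n + 1 - (p - 1) / 2)) % (2 * n) + 1) := by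
    intro x y hxy
    have hN : 0 < 2 * n := by omega
    have hl1 : (x + 2 * n - (n + 1 - (p - 1) / 2)) % (2 * n) < 2 * n := Nat.mod_lt _ hN
    have hl2 : (y + 2 * n - (n + 1 - (p - 1) / 2)) % (2 * n) < 2 * n := Nat.mod_lt _ hN
    have hsum : (x + 2 * n - (n + 1 - (p - 1) / 2)) + (y + 2 * n - (n + 1 - (p - 1) / 2))
        = (p - 2) + (2 * n) * 2 := by omega
    have hmod : ((x + 2 * n - (n + 1 - (p - 1) / 2)) % (2 * n)
        + (y + 2 * n - (n + 1 - (p - 1) / 2)) % (2 * n)) % (2 * n) = p - 2 := by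
      rw [← Nat.add_mod, hsum, Nat.add_mul_mod_self_left]
      exact Nat.mod_eq_of_lt (by omega)
    set r1 := (x + 2 * n - (n + 1 - (p - 1) / 2)) % (2 * n) with hr1
    set r2 := (y + 2 * n - (n + 1 - (p - 1) / 2)) % (2 * n) with hr2
    have hcases : r1 + 1 + (r2 + 1) = p ∨ r1 + 1 + (r2 + 1) = 2 * n + p := by
      rcases Nat.lt_or_ge (r1 + r2) (2 * n) with h | h
      · have h4 : r1 + r2 = p - 2 := by rw [← Nat.mod_eq_of_lt h]; exact hmod
        omega
      · have h2 : r1 + r2 - 2 * n < 2 * n := by omega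
        rw [Nat.mod_eq_sub_mod h, Nat.mod_eq_of_lt h2] at hmod
        omega
    rcases hcases with h | h
    · exact aux_key1 (r1 + 1) (r2 + 1) (by omega) (by omega) (by rw [h]; exact hp)
    · exact aux_key1 (r1 + 1) (r2 + 1) (by omega) (by omega) (by rw [h]; exact hq)
  rintro ⟨i, s⟩ ⟨j, t⟩ hadj
  have hi := i.isLt
  have hj := j.isLt
  fin_cases s <;> fin_cases t <;>
    simp [ladderAdj, cyclePos, ccpLabel] at hadj ⊢
  · rcases hadj with h | h
    · exact main_h ((i : ℕ) + 1) ((j : ℕ) + 1) (by omega)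
    · exact (main_h ((j : ℕ) + 1) ((i : ℕ) + 1) (by omega)).symm
  · have hij : (i : ℕ) = (j : ℕ) := by rw [hadj]
    exact main_v ((i : ℕ) + 1) (2 * n - (j : ℕ)) (by omega)
  · have hij : (i : ℕ) = (j : ℕ) := by rw [hadj]
    exact main_v (2 * n - (i : ℕ)) ((j : ℕ) + 1) (by omega)
  · rcases hadj with h | h
    · exact (main_h (2 * n - (j : ℕ)) (2 * n - (i : ℕ)) (by omega)).symm
    · exact main_h (2 * n - (i : ℕ)) (2 * n - (j : ℕ)) (by omega)
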